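/- Let (X,f) be a topological dynamical system and L > 1. If f is L-Lipschitz, i.e., d(f(x),f(y)) ≤ L·d(x,y) for all x,y ∈ X, then h(f) ≤ dim_H(X) · log L, where dim_H denotes Hausdorff dimension. -/

import Mathlib

open MeasureTheory ENNReal

open Set Filter Dynamics


lemma lip_iter {X : Type*} [MetricSpace X] (f : X → X) {L : ℝ} (hL0 : 0 ≤ L)
    (hlip : ∀ x y : X, dist (f x) (f y) ≤ L * dist x y) (k : ℕ) (x y : X) :
    dist (f^[k] x) (f^[k] y) ≤ L ^ k * dist x y := by
  induction k with
  | zero => simp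
  | succ k ih =>
    rw [Function.iterate_succ_apply', Function.iterate_succ_apply']
    calc dist (f (f^[k] x)) (f (f^[k] y)) ≤ L * dist (f^[k] x) (f^[k] y) := hlip _ _
      _ ≤ L * (L ^ k * dist x y) := by
          exact mul_le_mul_of_nonneg_left ih hL0
      _ = L ^ (k+1) * dist x y := by ring

lemma dyn_cover_rec {X : Type*} [MetricSpace X] (f : X → X) {ε A : ℝ} (hε : 0 < ε)
    (hA : 1 ≤ A) {ι : Type*} (I : Finset ι) (B : ι → Set X) (m : ι → ℕ)
    (hm : ∀ i ∈ I, 1 ≤ m i)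
    (hcov : (Set.univ : Set X) ⊆ ⋃ i ∈ I, B i)
    (hgood : ∀ i ∈ I, ∀ x ∈ B i, ∀ y ∈ B i, ∀ k < m i, dist (f^[k] x) (f^[k] y) < ε)
    (hsum : ∑ i ∈ I, (A⁻¹) ^ (m i) ≤ 1/2) :
    ∀ n : ℕ, ∃ 𝒞 : Finset (Set X),
      ((Set.univ : Set X) ⊆ ⋃₀ ↑𝒞) ∧
      (∀ C ∈ 𝒞, ∀ x ∈ C, ∀ y ∈ C, ∀ k < n, dist (f^[k] x) (f^[k] y) < ε) ∧
      (𝒞.card : ℝ) ≤ 2 * (I.card + 1) * A ^ n := by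
  classical
  have hA0 : (0:ℝ) < A := lt_of_lt_of_le one_pos hA
  intro n
  induction n using Nat.strong_induction_on with
  | _ n IH =>
    rcases Nat.eq_zero_or_pos n with rfl | npos
    · refine ⟨{Set.univ}, by simp, by simp, ?_⟩
      simp only [Finset.card_singleton, Nat.cast_one, pow_zero, mul_one]
      have : (0:ℝ) ≤ I.card := Nat.cast_nonneg _
      linarith
    · -- inductive step
      have HC : ∀ i, ∃ 𝒞 : Finset (Set X), 1 ≤ m i ∧ m i < n →
          ((Set.univ : Set X) ⊆ ⋃₀ ↑𝒞 ∧
          (∀ C ∈ 𝒞, ∀ x ∈ C, ∀ y ∈ C, ∀ k < n - m i, dist (f^[k] x) (f^[k] y) < ε) ∧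
          (𝒞.card : ℝ) ≤ 2 * (I.card + 1) * A ^ (n - m i)) := by
        intro i
        by_cases h : 1 ≤ m i ∧ m i < n
        · obtain ⟨𝒞, h1, h2, h3⟩ := IH (n - m i) (by omega)
          exact ⟨𝒞, fun _ => ⟨h1, h2, h3⟩⟩
        · exact ⟨∅, fun h' => absurd h' h⟩
      choose 𝒟 h𝒟 using HC
      set child : ι → Finset (Set X) := fun i =>
        if 1 ≤ m i ∧ m i < n then
          (𝒟 i).image (fun C => B i ∩ f^[m i] ⁻¹' C)
        else {B i} with hchild
      refine ⟨I.biUnion child, ?_, ?_, ?_⟩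
      · -- covering
        intro x _
        obtain ⟨i, hiI, hxB⟩ := by simpa using hcov (mem_univ x)
        by_cases h : 1 ≤ m i ∧ m i < n
        · obtain ⟨hc, -, -⟩ := h𝒟 i h
          obtain ⟨C, hC𝒞, hC⟩ := by simpa using hc (mem_univ (f^[m i] x))
          refine ⟨B i ∩ f^[m i] ⁻¹' C, ?_, hxB, hC⟩
          simp only [Finset.coe_biUnion, mem_iUnion]
          refine ⟨i, hiI, ?_⟩
          rw [hchild]
          simp only [if_pos h, Finset.coe_image, mem_image]
          exact ⟨C, Finset.mem_coe.2 hC𝒞, rfl⟩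
        · refine ⟨B i, ?_, hxB⟩
          simp only [Finset.coe_biUnion, mem_iUnion]
          refine ⟨i, hiI, ?_⟩
          rw [hchild]
          simp only [if_neg h, Finset.coe_singleton, mem_singleton_iff]
      · -- goodness
        intro C hC x hx y hy k hk
        obtain ⟨i, hiI, hCi⟩ := Finset.mem_biUnion.1 hC
        by_cases h : 1 ≤ m i ∧ m i < n
        · rw [hchild] at hCi
          simp only [if_pos h, Finset.mem_image] at hCi
          obtain ⟨C', hC', rfl⟩ := hCi
          obtain ⟨-, hg, -⟩ := h𝒟 i h
          rcases lt_or_ge k (m i) with hki | hki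
          · exact hgood i hiI x hx.1 y hy.1 k hki
          · have hxk : f^[k] x = f^[k - m i] (f^[m i] x) := by
              rw [← Function.iterate_add_apply]
              congr 1; omega
            have hyk : f^[k] y = f^[k - m i] (f^[m i] y) := by
              rw [← Function.iterate_add_apply]
              congr 1; omega
            rw [hxk, hyk]
            exact hg C' hC' _ hx.2 _ hy.2 (k - m i) (by omega)
        · rw [hchild] at hCi
          simp only [if_neg h, Finset.mem_singleton] at hCi
          subst hCi
          have h1 := hm i hiI
          exact hgood i hiI x hx y hy k (by omega)
      · -- cardinality
        have hterm : ∀ i ∈ I, ((child i).card : ℝ) ≤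
            1 + 2 * (I.card + 1) * A ^ n * (A⁻¹) ^ (m i) := by
          intro i hiI
          by_cases h : 1 ≤ m i ∧ m i < n
          · obtain ⟨-, -, hcard⟩ := h𝒟 i h
            have h1 : ((child i).card : ℝ) ≤ ((𝒟 i).card : ℝ) := by
              rw [hchild]; simp only [if_pos h]
              exact_mod_cast Finset.card_image_le
            have h2 : A ^ (n - m i) = A ^ n * (A⁻¹) ^ (m i) := by
              rw [inv_pow, ← div_eq_mul_inv, _root_.eq_div_iff (by positivity), ← pow_add]
              congr 1; omega
            have := h1.trans hcard
            rw [h2] at this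
            nlinarith [pow_pos hA0 n, pow_pos (inv_pos.2 hA0) (m i)]
          · have : child i = {B i} := if_neg h
            rw [this]
            simp only [Finset.card_singleton, Nat.cast_one]
            have h0 : (0:ℝ) ≤ 2 * (I.card + 1) * A ^ n * (A⁻¹) ^ (m i) := by positivity
            linarith
        calc ((I.biUnion child).card : ℝ) ≤ ∑ i ∈ I, ((child i).card : ℝ) := by
              exact_mod_cast Finset.card_biUnion_le
          _ ≤ ∑ i ∈ I, (1 + 2 * (I.card + 1) * A ^ n * (A⁻¹) ^ (m i)) :=
              Finset.sum_le_sum hterm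
          _ = I.card + 2 * (I.card + 1) * A ^ n * ∑ i ∈ I, (A⁻¹) ^ (m i) := by
              rw [Finset.sum_add_distrib, ← Finset.mul_sum]; simp
          _ ≤ I.card + 2 * (I.card + 1) * A ^ n * (1/2) := by
              have : (0:ℝ) ≤ 2 * (I.card + 1) * A ^ n := by positivity
              nlinarith
          _ ≤ 2 * (I.card + 1) * A ^ n := by
              have h1 : (1:ℝ) ≤ A ^ n := one_le_pow₀ hA
              nlinarith [Nat.cast_nonneg (α := ℝ) I.card]

lemma exists_dyn_cover {X : Type*} [MetricSpace X] [MeasurableSpace X] [BorelSpace X] [CompactSpace X] [Nonempty X]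
    (f : X → X) {L : ℝ} (hL : 1 < L)
    (hlip : ∀ x y : X, dist (f x) (f y) ≤ L * dist x y)
    {s : ℝ} (hs : 0 < s) (hμ : μH[s] (Set.univ : Set X) = 0)
    {ε : ℝ} (hε : 0 < ε) :
    ∃ c : ℝ, 1 ≤ c ∧ ∀ n : ℕ, ∃ S : Finset X,
      IsDynCoverOf f Set.univ {p : X × X | dist p.1 p.2 < ε} n ↑S ∧
      (S.card : ℝ) ≤ c * (L ^ s) ^ n := by
  classical
  have hL0 : (0:ℝ) < L := lt_trans one_pos hL
  set δ : ℝ := (ε/4) ^ s / 4 with hδdef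
  have hδ : 0 < δ := by
    have : (0:ℝ) < (ε/4) ^ s := Real.rpow_pos_of_pos (by linarith) s
    positivity
  clear_value δ
  -- extract a Hausdorff cover
  rw [Measure.hausdorffMeasure_apply] at hμ
  have h1 : (⨅ (t : ℕ → Set X) (_ : (Set.univ : Set X) ⊆ ⋃ n, t n)
      (_ : ∀ n, EMetric.diam (t n) ≤ ENNReal.ofReal (ε/16)),
      ∑' n, ⨆ _ : (t n).Nonempty, EMetric.diam (t n) ^ s) = 0 := by
    refine le_antisymm ?_ zero_le
    rw [← hμ]
    exact le_iSup₂ (f := fun (r : ℝ≥0∞) (_ : 0 < r) => ⨅ (t : ℕ → Set X)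
      (_ : (Set.univ : Set X) ⊆ ⋃ n, t n) (_ : ∀ n, EMetric.diam (t n) ≤ r),
      ∑' n, ⨆ _ : (t n).Nonempty, EMetric.diam (t n) ^ s)
      (ENNReal.ofReal (ε/16)) (by simp [ENNReal.ofReal_pos]; linarith)
  have h2 : (⨅ (t : ℕ → Set X) (_ : (Set.univ : Set X) ⊆ ⋃ n, t n)
      (_ : ∀ n, EMetric.diam (t n) ≤ ENNReal.ofReal (ε/16)),
      ∑' n, ⨆ _ : (t n).Nonempty, EMetric.diam (t n) ^ s) < ENNReal.ofReal δ := by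
    rw [h1]; exact ENNReal.ofReal_pos.2 hδ
  simp only [iInf_lt_iff] at h2
  obtain ⟨t, hcov, hdiam, hlt⟩ := h2
  -- setup: thickened cover
  set η : ℕ → ℝ := fun i => (min (ε/16) ((δ * (1/2)^(i+1)) ^ (1/s))) / 2 with hηdef
  have hη0 : ∀ i, 0 < η i := by
    intro i
    have h3 : (0:ℝ) < (δ * (1/2)^(i+1)) ^ (1/s) := Real.rpow_pos_of_pos (by positivity) _
    have h4 : (0:ℝ) < ε/16 := by linarith
    rw [hηdef]
    positivity
  clear_value η
  set B : ℕ → Set X := fun i => Metric.thickening (η i) (t i) with hBdef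
  clear_value B
  set e : ℕ → ℝ≥0∞ := fun i => EMetric.diam (t i) with hedef
  clear_value e
  have hediam : ∀ i, e i ≤ ENNReal.ofReal (ε/16) := by
    intro i; rw [hedef]; exact hdiam i
  have he_top : ∀ i, e i ≠ ⊤ := fun i => ((hediam i).trans_lt ofReal_lt_top).ne
  set D : ℕ → ℝ := fun i => (e i).toReal + 2 * η i with hDdef
  clear_value D
  have hD0 : ∀ i, 0 < D i := by
    intro i
    have := ENNReal.toReal_nonneg (a := e i)
    have := hη0 i
    rw [hDdef]; dsimp only; linarith
  have hetoReal : ∀ i, (e i).toReal ≤ ε/16 := by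
    intro i
    exact ENNReal.toReal_le_of_le_ofReal (by linarith) (hediam i)
  have hη16 : ∀ i, 2 * η i ≤ ε/16 := by
    intro i
    have := min_le_left (ε/16) ((δ * (1/2)^(i+1)) ^ (1/s))
    rw [hηdef]; dsimp only; linarith
  have hD8 : ∀ i, D i ≤ ε/8 := by
    intro i
    have h5 := hetoReal i
    have h6 := hη16 i
    rw [hDdef]; dsimp only; linarith
  have hdistB : ∀ i, ∀ x ∈ B i, ∀ y ∈ B i, dist x y ≤ D i := by
    intro i x hx y hy
    have hB : EMetric.diam (B i) ≤ ENNReal.ofReal (D i) := by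
      have h7 : EMetric.diam (B i) ≤ e i + 2 * ((η i).toNNReal : ℝ≥0∞) := by
        rw [hBdef, hedef]
        dsimp only
        have := Metric.ediam_thickening_le (s := t i) (η i).toNNReal
        rwa [Real.coe_toNNReal _ (hη0 i).le] at this
      refine h7.trans ?_
      have h8 : 2 * ((η i).toNNReal : ℝ≥0∞) = ENNReal.ofReal (2 * η i) := by
        rw [ENNReal.ofReal_mul (by norm_num)]
        norm_num
        rfl
      rw [h8, hDdef]
      dsimp only
      rw [ENNReal.ofReal_add ENNReal.toReal_nonneg (by have := hη0 i; linarith),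
        ENNReal.ofReal_toReal (he_top i)]
    have h9 : edist x y ≤ ENNReal.ofReal (D i) := (EMetric.edist_le_diam_of_mem hx hy).trans hB
    rw [edist_dist] at h9
    exact (ENNReal.ofReal_le_ofReal_iff (hD0 i).le).1 h9
  have hη2 : ∀ i, (2 * η i) ^ s ≤ δ * (1/2)^(i+1) := by
    intro i
    have h10 : 2 * η i ≤ (δ * (1/2)^(i+1)) ^ (1/s) := by
      have := min_le_right (ε/16) ((δ * (1/2)^(i+1)) ^ (1/s))
      rw [hηdef]; dsimp only; linarith
    calc (2 * η i) ^ s ≤ ((δ * (1/2)^(i+1)) ^ (1/s)) ^ s :=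
          Real.rpow_le_rpow (by have := hη0 i; linarith) h10 hs.le
      _ = δ * (1/2)^(i+1) := by
          rw [show (1:ℝ)/s = s⁻¹ from one_div s, Real.rpow_inv_rpow (by positivity) hs.ne']
  -- compactness
  have hcov' : (Set.univ : Set X) ⊆ ⋃ i, B i := by
    intro x hx
    obtain ⟨i, hi⟩ := mem_iUnion.1 (hcov hx)
    refine mem_iUnion.2 ⟨i, ?_⟩
    rw [hBdef]
    exact Metric.self_subset_thickening (hη0 i) _ hi
  obtain ⟨I, hI⟩ := isCompact_univ.elim_finite_subcover B
    (fun i => by rw [hBdef]; exact Metric.isOpen_thickening) hcov'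
  -- times
  set m : ℕ → ℕ := fun i => ⌊Real.logb L (ε/(2 * D i))⌋₊ + 1 with hmdef
  clear_value m
  have harg : ∀ i, 4 ≤ ε / (2 * D i) := by
    intro i
    have h11 := hD8 i
    have h12 := hD0 i
    rw [le_div_iff₀ (by linarith)]
    nlinarith
  have hlogb0 : ∀ i, 0 ≤ Real.logb L (ε/(2*D i)) :=
    fun i => Real.logb_nonneg hL (by linarith [harg i])
  have hLk : ∀ i, ∀ k < m i, L ^ k * D i ≤ ε/2 := by
    intro i k hk
    have h13 : (k:ℝ) ≤ Real.logb L (ε/(2 * D i)) := by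
      have hk' : k ≤ ⌊Real.logb L (ε/(2 * D i))⌋₊ := by
        have hmi : m i = ⌊Real.logb L (ε/(2 * D i))⌋₊ + 1 := by simp only [hmdef]
        omega
      exact le_trans (Nat.cast_le.2 hk') (Nat.floor_le (hlogb0 i))
    have h14 : L ^ k ≤ ε / (2 * D i) := by
      calc L ^ k = L ^ (k:ℝ) := (Real.rpow_natCast L k).symm
        _ ≤ L ^ Real.logb L (ε/(2 * D i)) :=
            Real.rpow_le_rpow_of_exponent_le hL.le h13
        _ = ε / (2 * D i) := Real.rpow_logb hL0 (ne_of_gt hL) (by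
            have := hD0 i; positivity)
    have h15 := hD0 i
    calc L ^ k * D i ≤ (ε / (2 * D i)) * D i :=
          mul_le_mul_of_nonneg_right h14 h15.le
      _ = ε/2 := by field_simp
  have hgood : ∀ i ∈ I, ∀ x ∈ B i, ∀ y ∈ B i, ∀ k < m i,
      dist (f^[k] x) (f^[k] y) < ε := by
    intro i _ x hx y hy k hk
    have h16 : dist (f^[k] x) (f^[k] y) ≤ L ^ k * dist x y :=
      lip_iter f hL0.le hlip k x y
    have h17 : L ^ k * dist x y ≤ L ^ k * D i :=
      mul_le_mul_of_nonneg_left (hdistB i x hx y hy) (by positivity)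
    calc dist (f^[k] x) (f^[k] y) ≤ L ^ k * D i := h16.trans h17
      _ ≤ ε/2 := hLk i k hk
      _ < ε := by linarith
  -- the weight estimate
  set A : ℝ := L ^ s with hAdef
  clear_value A
  have hA1 : 1 ≤ A := by
    rw [hAdef, show (1:ℝ) = L ^ (0:ℝ) from (Real.rpow_zero L).symm]
    exact Real.rpow_le_rpow_of_exponent_le hL.le hs.le
  have hweight : ∀ i, (A⁻¹) ^ (m i) ≤ (2/ε) ^ s * (D i) ^ s := by
    intro i
    have hDi := hD0 i
    have hAinv : A⁻¹ = L ^ (-s) := by rw [Real.rpow_neg hL0.le, hAdef]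
    have h18 : (A⁻¹) ^ (m i) = L ^ (-s * (m i : ℝ)) := by
      rw [hAinv, ← Real.rpow_natCast (L ^ (-s)) (m i), ← Real.rpow_mul hL0.le]
    have h19 : Real.logb L (ε/(2 * D i)) ≤ (m i : ℝ) := by
      have hmi : m i = ⌊Real.logb L (ε/(2 * D i))⌋₊ + 1 := by simp only [hmdef]
      rw [hmi]
      push_cast
      exact (Nat.lt_floor_add_one _).le
    have h20 : -s * (m i : ℝ) ≤ -s * Real.logb L (ε/(2 * D i)) := by nlinarith
    calc (A⁻¹) ^ (m i) = L ^ (-s * (m i : ℝ)) := h18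
      _ ≤ L ^ (-s * Real.logb L (ε/(2 * D i))) :=
          Real.rpow_le_rpow_of_exponent_le hL.le h20
      _ = (ε / (2 * D i)) ^ (-s) := by
          rw [mul_comm, Real.rpow_mul hL0.le, Real.rpow_logb hL0 (ne_of_gt hL) (by positivity)]
      _ = (2 * D i / ε) ^ s := by
          rw [Real.rpow_neg (by positivity), ← Real.inv_rpow (by positivity), inv_div ε (2 * D i)]
      _ = (2/ε) ^ s * (D i) ^ s := by
          rw [show 2 * D i / ε = (2/ε) * D i by ring, Real.mul_rpow (by positivity) hDi.le]
  -- the sum estimate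
  have hDs : ∀ i, (D i) ^ s ≤ 2 ^ s * ((e i).toReal ^ s + (2 * η i) ^ s) := by
    intro i
    have ha0 : (0:ℝ) ≤ (e i).toReal := ENNReal.toReal_nonneg
    have hb0 : (0:ℝ) ≤ 2 * η i := by have := hη0 i; linarith
    have hmax : D i ≤ 2 * max ((e i).toReal) (2 * η i) := by
      rw [hDdef]; dsimp only
      have h1 := le_max_left ((e i).toReal) (2 * η i)
      have h2 := le_max_right ((e i).toReal) (2 * η i)
      linarith
    have hmax0 : (0:ℝ) ≤ max ((e i).toReal) (2 * η i) := le_trans ha0 (le_max_left _ _)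
    calc (D i) ^ s ≤ (2 * max ((e i).toReal) (2 * η i)) ^ s :=
          Real.rpow_le_rpow (hD0 i).le hmax hs.le
      _ = 2 ^ s * (max ((e i).toReal) (2 * η i)) ^ s :=
          Real.mul_rpow (by norm_num) hmax0
      _ ≤ 2 ^ s * ((e i).toReal ^ s + (2 * η i) ^ s) := by
          have h3 : (max ((e i).toReal) (2 * η i)) ^ s ≤ (e i).toReal ^ s + (2 * η i) ^ s := by
            rcases le_total ((e i).toReal) (2 * η i) with h | h
            · rw [max_eq_right h]
              have := Real.rpow_nonneg ha0 s
              linarith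
            · rw [max_eq_left h]
              have := Real.rpow_nonneg hb0 s
              linarith
          have h4 : (0:ℝ) ≤ 2 ^ s := Real.rpow_nonneg (by norm_num) s
          nlinarith
  have hsum_e : ∑ i ∈ I, (e i).toReal ^ s ≤ δ := by
    set a : ℕ → ℝ≥0∞ := fun i => ⨆ _ : (t i).Nonempty, EMetric.diam (t i) ^ s with hadef
    have ha_top : ∀ i, a i ≠ ⊤ :=
      fun i => ne_top_of_le_ne_top hlt.ne_top (ENNReal.le_tsum i)
    have he_le : ∀ i, (e i) ^ s ≤ a i := by
      intro i
      rcases (t i).eq_empty_or_nonempty with h | h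
      · have : e i ^ s = 0 := by
          rw [hedef]; dsimp only
          rw [h, show EMetric.diam (∅ : Set X) = 0 from Metric.ediam_empty, ENNReal.zero_rpow_of_pos hs]
        rw [this]; exact zero_le
      · rw [hadef]; dsimp only
        rw [iSup_pos h, hedef]
    calc ∑ i ∈ I, (e i).toReal ^ s = ∑ i ∈ I, ((e i) ^ s).toReal := by
          refine Finset.sum_congr rfl fun i _ => ?_
          exact ENNReal.toReal_rpow _ _
      _ ≤ ∑ i ∈ I, (a i).toReal := by
          refine Finset.sum_le_sum fun i _ => ?_
          exact ENNReal.toReal_mono (ha_top i) (he_le i)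
      _ = (∑ i ∈ I, a i).toReal := (ENNReal.toReal_sum (fun i _ => ha_top i)).symm
      _ ≤ δ := by
          refine ENNReal.toReal_le_of_le_ofReal hδ.le ?_
          exact (ENNReal.sum_le_tsum I).trans hlt.le
  have hsum_η : ∑ i ∈ I, (2 * η i) ^ s ≤ δ := by
    have hsummable : Summable (fun i : ℕ => (1/2:ℝ)^(i+1)) := by
      simpa [pow_succ] using summable_geometric_two.mul_right (1/2 : ℝ)
    have htsum : ∑' i:ℕ, (1/2:ℝ)^(i+1) = 1 := by
      calc ∑' i:ℕ, (1/2:ℝ)^(i+1) = ∑' i:ℕ, (1/2:ℝ)^i * (1/2) := by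
            refine tsum_congr fun i => ?_; rw [pow_succ]
        _ = (∑' i:ℕ, (1/2:ℝ)^i) * (1/2) := tsum_mul_right
        _ = 1 := by rw [tsum_geometric_two]; norm_num
    calc ∑ i ∈ I, (2 * η i) ^ s ≤ ∑ i ∈ I, δ * (1/2)^(i+1) :=
          Finset.sum_le_sum fun i _ => hη2 i
      _ = δ * ∑ i ∈ I, (1/2:ℝ)^(i+1) := by rw [Finset.mul_sum]
      _ ≤ δ * 1 := by
          refine mul_le_mul_of_nonneg_left
            ((hsummable.sum_le_tsum I (fun i _ => by positivity)).trans htsum.le) hδ.le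
      _ = δ := mul_one δ
  have hsum : ∑ i ∈ I, (A⁻¹) ^ (m i) ≤ 1/2 := by
    have hstep : ∑ i ∈ I, (A⁻¹) ^ (m i) ≤ (2/ε) ^ s * (2 ^ s * (δ + δ)) := by
      calc ∑ i ∈ I, (A⁻¹) ^ (m i) ≤ ∑ i ∈ I, (2/ε) ^ s * (D i) ^ s :=
            Finset.sum_le_sum fun i _ => hweight i
        _ = (2/ε) ^ s * ∑ i ∈ I, (D i) ^ s := by rw [Finset.mul_sum]
        _ ≤ (2/ε) ^ s * ∑ i ∈ I, (2 ^ s * ((e i).toReal ^ s + (2 * η i) ^ s)) := by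
            refine mul_le_mul_of_nonneg_left (Finset.sum_le_sum fun i _ => hDs i) ?_
            positivity
        _ = (2/ε) ^ s * (2 ^ s * (∑ i ∈ I, (e i).toReal ^ s + ∑ i ∈ I, (2 * η i) ^ s)) := by
            rw [← Finset.mul_sum, Finset.sum_add_distrib]
        _ ≤ (2/ε) ^ s * (2 ^ s * (δ + δ)) := by
            have h5 : (0:ℝ) ≤ (2/ε) ^ s := Real.rpow_nonneg (by positivity) s
            have h6 : (0:ℝ) ≤ 2 ^ s := Real.rpow_nonneg (by norm_num) s
            have h7 : ∑ i ∈ I, (e i).toReal ^ s + ∑ i ∈ I, (2 * η i) ^ s ≤ δ + δ :=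
              add_le_add hsum_e hsum_η
            exact mul_le_mul_of_nonneg_left (mul_le_mul_of_nonneg_left h7 h6) h5
    refine hstep.trans_eq ?_
    have hδ2 : δ + δ = (ε/4) ^ s / 2 := by rw [hδdef]; ring
    rw [hδ2]
    have hc : (2/ε) ^ s * (2 ^ s * ((ε/4) ^ s / 2)) = ((2/ε) * (2 * (ε/4))) ^ s / 2 := by
      rw [Real.mul_rpow (by positivity) (by positivity),
        Real.mul_rpow (by norm_num) (by positivity)]
      ring
    rw [hc, show (2/ε) * (2 * (ε/4)) = 1 by field_simp; ring, Real.one_rpow]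
  -- apply the recursion
  have hm1 : ∀ i ∈ I, 1 ≤ m i := by
    intro i _
    have hmi : m i = ⌊Real.logb L (ε/(2 * D i))⌋₊ + 1 := by simp only [hmdef]
    omega
  have hrec := dyn_cover_rec f hε hA1 I B m hm1 hI hgood hsum
  refine ⟨2 * (I.card + 1), ?_, fun n => ?_⟩
  · have : (0:ℝ) ≤ I.card := Nat.cast_nonneg _
    linarith
  · obtain ⟨𝒞, hc1, hc2, hc3⟩ := hrec n
    set g : Set X → X := fun C => if h : C.Nonempty then h.choose else Classical.arbitrary X
      with hgdef
    refine ⟨𝒞.image g, ?_, ?_⟩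
    · intro x hx
      obtain ⟨C, hC𝒞, hxC⟩ := hc1 hx
      have hCne : C.Nonempty := ⟨x, hxC⟩
      have hgC : g C ∈ C := by
        have : g C = hCne.choose := by rw [hgdef]; exact dif_pos hCne
        rw [this]
        exact hCne.choose_spec
      refine ⟨g C, ?_, ?_⟩
      · exact Finset.mem_coe.2 (Finset.mem_image_of_mem g (Finset.mem_coe.1 hC𝒞))
      · rw [mem_dynEntourage]
        intro k hk
        exact hc2 C (Finset.mem_coe.1 hC𝒞) _ hxC _ hgC k hk
    · calc ((𝒞.image g).card : ℝ) ≤ (𝒞.card : ℝ) := by exact_mod_cast Finset.card_image_le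
        _ ≤ 2 * (I.card + 1) * A ^ n := hc3

open EReal in
lemma entEnt_le {X : Type*} [MetricSpace X] [MeasurableSpace X] [BorelSpace X]
    [CompactSpace X] [Nonempty X]
    (f : X → X) {L : ℝ} (hL : 1 < L)
    (hlip : ∀ x y : X, dist (f x) (f y) ≤ L * dist x y)
    {s : ℝ} (hs : 0 < s) (hμ : μH[s] (Set.univ : Set X) = 0)
    {ε : ℝ} (hε : 0 < ε) :
    coverEntropyEntourage f (Set.univ : Set X) {p : X × X | dist p.1 p.2 < ε}
      ≤ ((s * Real.log L : ℝ) : EReal) := by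
  obtain ⟨c, hc1, hS⟩ := exists_dyn_cover f hL hlip hs hμ hε
  set U := {p : X × X | dist p.1 p.2 < ε} with hU
  have hL0 : (0:ℝ) < L := lt_trans one_pos hL
  have hA : (0:ℝ) < L ^ s := Real.rpow_pos_of_pos hL0 s
  set u : ℕ → EReal := fun n => ((Real.log c : ℝ) : EReal) / (n : EReal) with hudef
  set v : ℕ → EReal := fun _ : ℕ => ((s * Real.log L : ℝ) : EReal) with hvdef
  have hkey : ∀ n : ℕ, 1 ≤ n →
      ENNReal.log (coverMincard f Set.univ U n) / (n : EReal) ≤ u n + v n := by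
    intro n hn
    obtain ⟨S, hcov, hcard⟩ := hS n
    have h1 : ((coverMincard f Set.univ U n : ℕ∞) : ℝ≥0∞)
        ≤ ENNReal.ofReal (c * (L ^ s) ^ n) := by
      calc ((coverMincard f Set.univ U n : ℕ∞) : ℝ≥0∞) ≤ ((S.card : ℕ∞) : ℝ≥0∞) :=
            ENat.toENNReal_mono hcov.coverMincard_le_card
        _ = ((S.card : ℕ) : ℝ≥0∞) := by simp
        _ = ENNReal.ofReal ((S.card : ℕ) : ℝ) := (ENNReal.ofReal_natCast _).symm
        _ ≤ ENNReal.ofReal (c * (L ^ s) ^ n) := ENNReal.ofReal_le_ofReal hcard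
    have h2 : ENNReal.log (coverMincard f Set.univ U n)
        ≤ ((Real.log c + n * (s * Real.log L) : ℝ) : EReal) := by
      refine (ENNReal.log_monotone h1).trans_eq ?_
      rw [ENNReal.log_ofReal_of_pos (by positivity)]
      congr 1
      rw [Real.log_mul (by linarith) (by positivity), Real.log_pow, Real.log_rpow hL0]
    have h3 : ENNReal.log (coverMincard f Set.univ U n) / (n : EReal)
        ≤ ((Real.log c + n * (s * Real.log L) : ℝ) : EReal) / (n : EReal) :=
      monotone_div_right_of_nonneg (Nat.cast_nonneg' n) h2
    refine h3.trans_eq ?_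
    have hlogc : (0:ℝ) ≤ Real.log c := Real.log_nonneg hc1
    have hslog : (0:ℝ) ≤ s * Real.log L := by
      have := Real.log_nonneg hL.le
      positivity
    rw [EReal.coe_add, EReal.div_right_distrib_of_nonneg (by exact_mod_cast hlogc)
      (by apply EReal.coe_nonneg.2; positivity)]
    congr 1
    rw [EReal.coe_mul, EReal.coe_coe_eq_natCast, mul_comm, ← EReal.mul_div,
      EReal.div_self (natCast_ne_bot n) (natCast_ne_top n)
        (by exact_mod_cast (by omega : n ≠ 0)), mul_one]
  have hu : atTop.limsup u = 0 :=
    (EReal.tendsto_const_div_atTop_nhds_zero_nat (EReal.coe_ne_bot _)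
      (EReal.coe_ne_top _)).limsup_eq
  calc coverEntropyEntourage f (Set.univ : Set X) U
      ≤ atTop.limsup (u + v) := by
        refine limsup_le_limsup ?_
        filter_upwards [eventually_ge_atTop 1] with n hn
        exact hkey n hn
    _ ≤ atTop.limsup u + atTop.limsup v := by
        refine EReal.limsup_add_le ?_ ?_
        · rw [hu]; exact Or.inl (by simp)
        · rw [hu]; exact Or.inl (by simp)
    _ = ((s * Real.log L : ℝ) : EReal) := by
        rw [hu, limsup_const, zero_add]

theorem entropy_le_dimH_mul_log_lipschitz
    {X : Type*} [MetricSpace X] [CompactSpace X]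
    (f : X → X) (hf : Continuous f) (hfs : Function.Surjective f)
    (L : ℝ) (hL : 1 < L) (hlip : ∀ x y : X, dist (f x) (f y) ≤ L * dist x y) :
    Dynamics.coverEntropy f (Set.univ : Set X) ≤
      ((dimH (Set.univ : Set X) * ENNReal.ofReal (Real.log L) : ℝ≥0∞) : EReal) := by
  rcases isEmpty_or_nonempty X with hX | hX
  · have h0 : (Set.univ : Set X) = ∅ := Set.univ_eq_empty_iff.2 hX
    rw [h0, Dynamics.coverEntropy_empty]
    exact bot_le
  · borelize X
    have hlog : 0 < Real.log L := Real.log_pos hL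
    rcases eq_top_or_lt_top (dimH (Set.univ : Set X)) with htop | hfin
    · rw [htop, ENNReal.top_mul (ENNReal.ofReal_pos.2 hlog).ne', EReal.coe_ennreal_top]
      exact le_top
    · rw [Dynamics.coverEntropy_eq_iSup_basis Metric.uniformity_basis_dist f Set.univ]
      refine iSup₂_le fun ε hε => ?_
      refine EReal.le_of_forall_lt_iff_le.1 fun z hz => ?_
      set d : ℝ≥0∞ := dimH (Set.univ : Set X) with hd
      have hne : d * ENNReal.ofReal (Real.log L) ≠ ⊤ :=
        ENNReal.mul_ne_top hfin.ne ENNReal.ofReal_ne_top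
      have h1 : (((d * ENNReal.ofReal (Real.log L)).toReal : ℝ) : EReal)
          = ((d * ENNReal.ofReal (Real.log L) : ℝ≥0∞) : EReal) := by
        rw [← EReal.toReal_coe_ennreal (x := d * ENNReal.ofReal (Real.log L))]
        exact EReal.coe_toReal (fun h => hne (EReal.coe_ennreal_eq_top_iff.1 h))
          (EReal.coe_ennreal_ne_bot _)
      have hzr : (d * ENNReal.ofReal (Real.log L)).toReal < z := by
        rw [← h1] at hz
        exact EReal.coe_lt_coe_iff.1 hz
      have htored : (d * ENNReal.ofReal (Real.log L)).toReal = d.toReal * Real.log L := by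
        rw [ENNReal.toReal_mul, ENNReal.toReal_ofReal hlog.le]
      set s : ℝ := z / Real.log L with hsdef
      have hds : d.toReal < s := by
        rw [hsdef, lt_div_iff₀ hlog]
        rw [htored] at hzr
        linarith
      have hs0 : 0 < s := lt_of_le_of_lt ENNReal.toReal_nonneg hds
      have hdim : d < ENNReal.ofReal s := (ENNReal.lt_ofReal_iff_toReal_lt hfin.ne).2 hds
      have hμ : μH[s] (Set.univ : Set X) = 0 := by
        have h := hausdorffMeasure_of_dimH_lt (X := X) (s := (Set.univ : Set X))
          (d := s.toNNReal) hdim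
        rwa [Real.coe_toNNReal _ hs0.le] at h
      refine (entEnt_le f hL hlip hs0 hμ hε).trans ?_
      rw [show s * Real.log L = z from div_mul_cancel₀ z hlog.ne']
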